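/- Let n ≥ 2, let M be a universal n-linear order, let m ∈ {1, …, n}, and let g ∈ Aut(M) with g ≠ id. Then g is unbounded with respect to <_m. -/
import Mathlib


/-- A set `M` equipped with `n` linear orders `<_1, …, <_n`. -/
structure NLinear (n : ℕ) (M : Type*) where
  lt : Fin n → M → M → Prop
  irrefl : ∀ i a, ¬ lt i a a
  trans : ∀ i a b c, lt i a b → lt i b c → lt i a c
  total : ∀ i a b, lt i a b ∨ a = b ∨ lt i b a

/-- `M` with its `n` linear orders is a universal `n`-linear order: it is countably
infinite and has the one-point extension property. -/
structure IsUniversalNLinear (n : ℕ) (M : Type*) (L : NLinear n M) : Prop where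
  countable : Countable M
  infinite : Infinite M
  extension : ∀ (A : Finset M) (D : Fin n → Set M),
    (∀ i, D i ⊆ ↑A) →
    (∀ i, ∀ a ∈ A, ∀ b ∈ A, L.lt i a b → b ∈ D i → a ∈ D i) →
    ∃ x, x ∉ A ∧ ∀ i, ∀ a ∈ A, (L.lt i a x ↔ a ∈ D i)

/-- The automorphism group of an `n`-linearly ordered set, as a subgroup of `Equiv.Perm M`. -/
def NLinear.aut {n : ℕ} {M : Type*} (L : NLinear n M) : Subgroup (Equiv.Perm M) where
  carrier := {g | ∀ i a b, L.lt i a b ↔ L.lt i (g a) (g b)}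
  one_mem' := fun _ _ _ => Iff.rfl
  mul_mem' := by
    intro g h hg hh i a b
    exact (hh i a b).trans (hg i (h a) (h b))
  inv_mem' := by
    intro g hg i a b
    simpa using (hg i (g⁻¹ a) (g⁻¹ b)).symm

/-- `f` has a single `+`-orbital with respect to `<_m`. -/
def NLinear.SinglePlus {n : ℕ} {M : Type*} (L : NLinear n M) (m : Fin n)
    (f : Equiv.Perm M) : Prop :=
  ∃ a : M, L.lt m a (f a) ∧ (∀ x : M, ∃ k : ℤ, L.lt m x ((f ^ k) a)) ∧
    (∀ x : M, ∃ k : ℤ, L.lt m ((f ^ k) a) x)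

/-- `f` has a single `−`-orbital with respect to `<_m`. -/
def NLinear.SingleMinus {n : ℕ} {M : Type*} (L : NLinear n M) (m : Fin n)
    (f : Equiv.Perm M) : Prop :=
  ∃ a : M, L.lt m (f a) a ∧ (∀ x : M, ∃ k : ℤ, L.lt m x ((f ^ k) a)) ∧
    (∀ x : M, ∃ k : ℤ, L.lt m ((f ^ k) a) x)

/-- `f` has a `+`-orbital unbounded above with respect to `<_m`. -/
def NLinear.PlusUnbAbove {n : ℕ} {M : Type*} (L : NLinear n M) (m : Fin n)
    (f : Equiv.Perm M) : Prop :=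
  ∃ a : M, L.lt m a (f a) ∧ ∀ x : M, ∃ k : ℤ, L.lt m x ((f ^ k) a)

/-- `f` has a `−`-orbital unbounded below with respect to `<_m`. -/
def NLinear.MinusUnbBelow {n : ℕ} {M : Type*} (L : NLinear n M) (m : Fin n)
    (f : Equiv.Perm M) : Prop :=
  ∃ b : M, L.lt m (f b) b ∧ ∀ x : M, ∃ k : ℤ, L.lt m ((f ^ k) b) x

lemma stmt13_aux {n : ℕ} {M : Type*} (L : NLinear n M)
    (hL : IsUniversalNLinear n M L) (m i : Fin n) (him : i ≠ m)
    (g : Equiv.Perm M) (hg : ∀ j a b, L.lt j a b ↔ L.lt j (g a) (g b))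
    (c : M) (hc : g c ≠ c) (A : Finset M) (hcA : c ∈ A) (hgcA : g c ∈ A)
    (s : Set M) (hsA : s ⊆ ↑A)
    (hsdc : ∀ u ∈ A, ∀ v ∈ A, L.lt m u v → v ∈ s → u ∈ s)
    (hfix : ∀ x, x ∉ A → (∀ u ∈ A, (L.lt m u x ↔ u ∈ s)) → g x = x) : False := by
  classical
  have hne : c ≠ g c := fun h => hc h.symm
  rcases L.total i c (g c) with hlt | heq | hlt
  · -- c <_i g c
    set D : Fin n → Set M := fun j =>
      if j = m then s else if j = i then {u | u ∈ A ∧ ¬ L.lt i c u} else ∅ with hD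
    have hDm' : D m = s := by simp [hD]
    have hDi : D i = {u | u ∈ A ∧ ¬ L.lt i c u} := by simp [hD, him]
    have hDo : ∀ j, j ≠ m → j ≠ i → D j = ∅ := by
      intro j h1 h2
      simp [hD, h1, h2]
    have hsub : ∀ j, D j ⊆ ↑A := by
      intro j
      by_cases hj : j = m
      · rw [hj, hDm']
        exact hsA
      · by_cases hj' : j = i
        · rw [hj', hDi]
          exact fun u hu => hu.1
        · rw [hDo j hj hj']
          exact Set.empty_subset _
    have hdc : ∀ j, ∀ u ∈ A, ∀ v ∈ A, L.lt j u v → v ∈ D j → u ∈ D j := by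
      intro j u hu v hv huv hvD
      by_cases hj : j = m
      · subst hj
        rw [hDm'] at hvD ⊢
        exact hsdc u hu v hv huv hvD
      · by_cases hj' : j = i
        · subst hj'
          rw [hDi] at hvD ⊢
          exact ⟨hu, fun hcu => hvD.2 (L.trans j c u v hcu huv)⟩
        · rw [hDo j hj hj'] at hvD
          exact absurd hvD (Set.notMem_empty v)
    obtain ⟨x, hxA, hx⟩ := hL.extension A D hsub hdc
    have hDmx : ∀ u ∈ A, (L.lt m u x ↔ u ∈ s) := by
      intro u hu
      rw [hx m u hu, hDm']
    have hgx : g x = x := hfix x hxA hDmx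
    have h1 : L.lt i c x := by
      rw [hx i c hcA, hDi]
      exact ⟨hcA, L.irrefl i c⟩
    have h2 : ¬ L.lt i (g c) x := by
      rw [hx i (g c) hgcA, hDi]
      rintro ⟨-, h⟩
      exact h hlt
    have := (hg i c x).mp h1
    rw [hgx] at this
    exact h2 this
  · exact hne heq
  · -- g c <_i c
    set D : Fin n → Set M := fun j =>
      if j = m then s else if j = i then {u | u ∈ A ∧ ¬ L.lt i (g c) u} else ∅ with hD
    have hDm' : D m = s := by simp [hD]
    have hDi : D i = {u | u ∈ A ∧ ¬ L.lt i (g c) u} := by simp [hD, him]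
    have hDo : ∀ j, j ≠ m → j ≠ i → D j = ∅ := by
      intro j h1 h2
      simp [hD, h1, h2]
    have hsub : ∀ j, D j ⊆ ↑A := by
      intro j
      by_cases hj : j = m
      · rw [hj, hDm']
        exact hsA
      · by_cases hj' : j = i
        · rw [hj', hDi]
          exact fun u hu => hu.1
        · rw [hDo j hj hj']
          exact Set.empty_subset _
    have hdc : ∀ j, ∀ u ∈ A, ∀ v ∈ A, L.lt j u v → v ∈ D j → u ∈ D j := by
      intro j u hu v hv huv hvD
      by_cases hj : j = m
      · subst hj
        rw [hDm'] at hvD ⊢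
        exact hsdc u hu v hv huv hvD
      · by_cases hj' : j = i
        · subst hj'
          rw [hDi] at hvD ⊢
          exact ⟨hu, fun hcu => hvD.2 (L.trans j (g c) u v hcu huv)⟩
        · rw [hDo j hj hj'] at hvD
          exact absurd hvD (Set.notMem_empty v)
    obtain ⟨x, hxA, hx⟩ := hL.extension A D hsub hdc
    have hDmx : ∀ u ∈ A, (L.lt m u x ↔ u ∈ s) := by
      intro u hu
      rw [hx m u hu, hDm']
    have hgx : g x = x := hfix x hxA hDmx
    have h1 : L.lt i (g c) x := by
      rw [hx i (g c) hgcA, hDi]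
      exact ⟨hgcA, L.irrefl i (g c)⟩
    have h2 : ¬ L.lt i c x := by
      rw [hx i c hcA, hDi]
      rintro ⟨-, h⟩
      exact h hlt
    have h3 : L.lt i c x := by
      rw [hg i c x, hgx]
      exact h1
    exact h2 h3

/-- For `n ≥ 2`, every nontrivial automorphism of a universal
`n`-linear order is unbounded with respect to `<_m`: it is neither right-bounded nor
left-bounded with respect to `<_m`. -/
theorem stmt13 {n : ℕ} (hn : 2 ≤ n) {M : Type*} (L : NLinear n M)
    (hL : IsUniversalNLinear n M L) (m : Fin n) (g : L.aut) (hg : g ≠ 1) :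
    (¬ ∃ a : M, ∀ b : M, L.lt m a b → (g : Equiv.Perm M) b = b) ∧
    (¬ ∃ a : M, ∀ b : M, L.lt m b a → (g : Equiv.Perm M) b = b) := by
  classical
  have hgaut : ∀ j a b, L.lt j a b ↔ L.lt j ((g : Equiv.Perm M) a) ((g : Equiv.Perm M) b) :=
    g.2
  obtain ⟨c, hc⟩ : ∃ c, (g : Equiv.Perm M) c ≠ c := by
    by_contra h
    push_neg at h
    exact hg (Subtype.ext (Equiv.ext h))
  obtain ⟨i, him⟩ : ∃ i : Fin n, i ≠ m := by
    by_cases h : m = ⟨0, by omega⟩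
    · exact ⟨⟨1, by omega⟩, by simp [h, Fin.ext_iff]⟩
    · exact ⟨⟨0, by omega⟩, fun hh => h hh.symm⟩
  constructor
  · rintro ⟨a, ha⟩
    set A : Finset M := {a, c, (g : Equiv.Perm M) c} with hA
    have hcA : c ∈ A := by simp [hA]
    have hgcA : (g : Equiv.Perm M) c ∈ A := by simp [hA]
    refine stmt13_aux L hL m i him (g : Equiv.Perm M) hgaut c hc A hcA hgcA
      {u | u ∈ A ∧ ¬ L.lt m a u} ?_ ?_ ?_
    · intro u hu
      exact hu.1
    · intro u hu v hv huv hvs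
      exact ⟨hu, fun hau => hvs.2 (L.trans m a u v hau huv)⟩
    · intro x hxA hx
      have haA : a ∈ A := by simp [hA]
      have : L.lt m a x := by
        rw [hx a haA]
        exact ⟨haA, L.irrefl m a⟩
      exact ha x this
  · rintro ⟨a, ha⟩
    set A : Finset M := {a, c, (g : Equiv.Perm M) c} with hA
    have hcA : c ∈ A := by simp [hA]
    have hgcA : (g : Equiv.Perm M) c ∈ A := by simp [hA]
    refine stmt13_aux L hL m i him (g : Equiv.Perm M) hgaut c hc A hcA hgcA
      {u | u ∈ A ∧ L.lt m u a} ?_ ?_ ?_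
    · intro u hu
      exact hu.1
    · intro u hu v hv huv hvs
      exact ⟨hu, L.trans m u v a huv hvs.2⟩
    · intro x hxA hx
      have haA : a ∈ A := by simp [hA]
      have hax : ¬ L.lt m a x := by
        rw [hx a haA]
        rintro ⟨-, h⟩
        exact L.irrefl m a h
      have hxa : x ≠ a := by
        intro h
        exact hxA (h ▸ haA)
      rcases L.total m a x with h | h | h
      · exact absurd h hax
      · exact absurd h.symm hxa
      · exact ha x h
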